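/- arXiv:2104.06938 — 3 statements merged into one kernel-verified Lean document; each statement's English description precedes it below -/
import Mathlib

section
/- The Shifts product basis is unextendible: there is no nonzero product vector |a⟩⊗|b⟩⊗|c⟩ in (ℂ²)^⊗3 orthogonal to all four Shifts states S₁, S₂, S₃, S₄. -/
noncomputable section

open scoped BigOperators

abbrev Q3 := Fin 2 × Fin 2 × Fin 2

def ket0 : Fin 2 → ℂ := ![1, 0]
def ket1 : Fin 2 → ℂ := ![0, 1]
noncomputable def ketP : Fin 2 → ℂ := ![(Real.sqrt 2 : ℂ)⁻¹, (Real.sqrt 2 : ℂ)⁻¹]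
noncomputable def ketM : Fin 2 → ℂ := ![(Real.sqrt 2 : ℂ)⁻¹, -(Real.sqrt 2 : ℂ)⁻¹]

/-- tensor product of three single-qubit vectors -/
def tp3 (a b c : Fin 2 → ℂ) : Q3 → ℂ := fun x => a x.1 * b x.2.1 * c x.2.2

/-- the four Shifts UPB states -/
noncomputable def Shifts : Fin 4 → Q3 → ℂ :=
  ![tp3 ket0 ket1 ketP, tp3 ket1 ketP ket0, tp3 ketP ket0 ket1, tp3 ketM ketM ketM]

/-- standard inner product -/
def ip {n : Type*} [Fintype n] (x y : n → ℂ) : ℂ := ∑ i, star (x i) * y i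

/-- projector onto a vector -/
def proj {n : Type*} [Fintype n] (v : n → ℂ) : Matrix n n ℂ := Matrix.vecMulVec v (star v)

/-- the state ρ_SU -/
noncomputable def rhoSU : Matrix Q3 Q3 ℂ :=
  (4 : ℂ)⁻¹ • ((1 : Matrix Q3 Q3 ℂ) - ∑ i : Fin 4, proj (Shifts i))

lemma helperA (a0 a1 b0 b1 c0 c1 : ℂ)
    (ha : a0 ≠ 0 ∨ a1 ≠ 0) (hb : b0 ≠ 0 ∨ b1 ≠ 0) (hc : c0 ≠ 0 ∨ c1 ≠ 0)
    (e1 : a0 * b1 * (c0 + c1) = 0)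
    (e2 : a1 * (b0 + b1) * c0 = 0)
    (e3 : (a0 + a1) * b0 * c1 = 0)
    (h4 : a0 = a1) : False := by
  subst h4
  have ha0 : a0 ≠ 0 := by
    rcases ha with h | h
    · exact h
    · exact h
  have h3 : b0 = 0 ∨ c1 = 0 := by
    rcases mul_eq_zero.mp e3 with h | h
    · rcases mul_eq_zero.mp h with h | h
      · exact absurd (by linear_combination h / 2) ha0
      · exact Or.inl h
    · exact Or.inr h
  rcases h3 with hb0 | hc1
  · subst hb0
    have hb1 : b1 ≠ 0 := by
      rcases hb with h | h
      · exact absurd rfl h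
      · exact h
    have hcc : c0 + c1 = 0 := by
      rcases mul_eq_zero.mp e1 with h | h
      · rcases mul_eq_zero.mp h with h | h
        · exact absurd h ha0
        · exact absurd h hb1
      · exact h
    have hc0 : c0 = 0 := by
      rcases mul_eq_zero.mp e2 with h | h
      · rcases mul_eq_zero.mp h with h | h
        · exact absurd h ha0
        · exact absurd (by linear_combination h) hb1
      · exact h
    have hc1 : c1 = 0 := by linear_combination hcc - hc0
    rcases hc with h | h
    · exact h hc0
    · exact h hc1
  · subst hc1
    have hc0 : c0 ≠ 0 := by
      rcases hc with h | h
      · exact h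
      · exact absurd rfl h
    have hb1 : b1 = 0 := by
      rcases mul_eq_zero.mp e1 with h | h
      · rcases mul_eq_zero.mp h with h | h
        · exact absurd h ha0
        · exact h
      · exact absurd (by linear_combination h) hc0
    have hb0 : b0 = 0 := by
      rcases mul_eq_zero.mp e2 with h | h
      · rcases mul_eq_zero.mp h with h | h
        · exact absurd h ha0
        · linear_combination h - hb1
      · exact absurd h hc0
    rcases hb with h | h
    · exact h hb0
    · exact h hb1

lemma key (a0 a1 b0 b1 c0 c1 : ℂ)
    (ha : a0 ≠ 0 ∨ a1 ≠ 0) (hb : b0 ≠ 0 ∨ b1 ≠ 0) (hc : c0 ≠ 0 ∨ c1 ≠ 0)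
    (e1 : a0 * b1 * (c0 + c1) = 0)
    (e2 : a1 * (b0 + b1) * c0 = 0)
    (e3 : (a0 + a1) * b0 * c1 = 0)
    (e4 : (a0 - a1) * (b0 - b1) * (c0 - c1) = 0) : False := by
  rcases mul_eq_zero.mp e4 with h | h
  · rcases mul_eq_zero.mp h with h | h
    · exact helperA a0 a1 b0 b1 c0 c1 ha hb hc e1 e2 e3 (by linear_combination h)
    · exact helperA b0 b1 c0 c1 a0 a1 hb hc ha
        (by linear_combination e3) (by linear_combination e1) (by linear_combination e2)
        (by linear_combination h)
  · exact helperA c0 c1 a0 a1 b0 b1 hc ha hb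
      (by linear_combination e2) (by linear_combination e3) (by linear_combination e1)
      (by linear_combination h)

theorem shifts_unextendible :
    ¬ ∃ a b c : Fin 2 → ℂ, a ≠ 0 ∧ b ≠ 0 ∧ c ≠ 0 ∧
      ∀ i : Fin 4, ip (Shifts i) (tp3 a b c) = 0 := by
  rintro ⟨a, b, c, ha, hb, hc, h⟩
  have hs : ((Real.sqrt 2 : ℂ))⁻¹ ≠ 0 := by
    exact inv_ne_zero (by exact_mod_cast Real.sqrt_ne_zero'.mpr (by norm_num))
  have h0 := h 0
  have h1 := h 1
  have h2 := h 2
  have h3 := h 3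
  simp [ip, Shifts, tp3, ket0, ket1, ketP, ketM, Fintype.sum_prod_type,
    Fin.sum_univ_two, Matrix.cons_val_zero, Matrix.cons_val_one, Matrix.head_cons,
    map_inv₀, Complex.conj_ofReal] at h0 h1 h2 h3
  have ha' : a 0 ≠ 0 ∨ a 1 ≠ 0 := by
    by_contra hcon
    push_neg at hcon
    exact ha (funext fun i => by fin_cases i <;> simp [hcon.1, hcon.2])
  have hb' : b 0 ≠ 0 ∨ b 1 ≠ 0 := by
    by_contra hcon
    push_neg at hcon
    exact hb (funext fun i => by fin_cases i <;> simp [hcon.1, hcon.2])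
  have hc' : c 0 ≠ 0 ∨ c 1 ≠ 0 := by
    by_contra hcon
    push_neg at hcon
    exact hc (funext fun i => by fin_cases i <;> simp [hcon.1, hcon.2])
  have e1 : a 0 * b 1 * (c 0 + c 1) = 0 := by
    have : ((Real.sqrt 2 : ℂ))⁻¹ * (a 0 * b 1 * (c 0 + c 1)) = 0 := by linear_combination h0
    exact (mul_eq_zero.mp this).resolve_left hs
  have e2 : a 1 * (b 0 + b 1) * c 0 = 0 := by
    have : ((Real.sqrt 2 : ℂ))⁻¹ * (a 1 * (b 0 + b 1) * c 0) = 0 := by linear_combination h1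
    exact (mul_eq_zero.mp this).resolve_left hs
  have e3 : (a 0 + a 1) * b 0 * c 1 = 0 := by
    have : ((Real.sqrt 2 : ℂ))⁻¹ * ((a 0 + a 1) * b 0 * c 1) = 0 := by linear_combination h2
    exact (mul_eq_zero.mp this).resolve_left hs
  have e4 : (a 0 - a 1) * (b 0 - b 1) * (c 0 - c 1) = 0 := by
    have hkey : ((Real.sqrt 2 : ℂ))⁻¹ ^ 3 *
        ((a 0 - a 1) * (b 0 - b 1) * (c 0 - c 1)) = 0 := by
      linear_combination h3
    rcases mul_eq_zero.mp hkey with hh | hh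
    · exact absurd hh (pow_ne_zero 3 hs)
    · exact hh
  exact key (a 0) (a 1) (b 0) (b 1) (c 0) (c 1) ha' hb' hc' e1 e2 e3 e4
end
end

section
/- The state ρ_SU = (1/4)(I₈ − Σᵢ |Sᵢ⟩⟨Sᵢ|) is not fully separable: it cannot be written as a convex combination of pure product states |a⟩⟨a|⊗|b⟩⟨b|⊗|c⟩⟨c|. -/
noncomputable section

open scoped BigOperators

/-! ### auxiliary lemmas -/

lemma star_s : star ((Real.sqrt 2 : ℂ)⁻¹) = (Real.sqrt 2 : ℂ)⁻¹ := by
  simp [Complex.star_def, ← Complex.ofReal_inv]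

lemma s_ne : ((Real.sqrt 2 : ℂ))⁻¹ ≠ 0 := by
  simp [Real.sqrt_eq_zero']

lemma s_sq : ((Real.sqrt 2 : ℂ))⁻¹ * (Real.sqrt 2 : ℂ)⁻¹ = 2⁻¹ := by
  rw [← mul_inv]
  norm_num [← Complex.ofReal_mul, Real.mul_self_sqrt]

lemma ip_ket0 (v : Fin 2 → ℂ) : ip ket0 v = v 0 := by
  simp [ip, ket0, Fin.sum_univ_two]
lemma ip_ket1 (v : Fin 2 → ℂ) : ip ket1 v = v 1 := by
  simp [ip, ket1, Fin.sum_univ_two]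
lemma ip_ketP (v : Fin 2 → ℂ) : ip ketP v = (Real.sqrt 2 : ℂ)⁻¹ * (v 0 + v 1) := by
  simp [ip, ketP, Fin.sum_univ_two, star_s]; ring
lemma ip_ketM (v : Fin 2 → ℂ) : ip ketM v = (Real.sqrt 2 : ℂ)⁻¹ * (v 0 - v 1) := by
  simp [ip, ketM, Fin.sum_univ_two, star_s]; ring

lemma ip_tp3 (a b c a' b' c' : Fin 2 → ℂ) :
    ip (tp3 a b c) (tp3 a' b' c') = ip a a' * ip b b' * ip c c' := by
  simp only [ip, tp3, Fintype.sum_prod_type, Fin.sum_univ_two, star_mul']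
  ring

lemma sqrt2_pow2 : (Real.sqrt 2 : ℝ) ^ 2 = 2 := Real.sq_sqrt (by norm_num)
lemma sqrt2_pow6 : (Real.sqrt 2 : ℝ) ^ 6 = 8 := by
  have h : ((Real.sqrt 2 : ℝ) ^ 2) ^ 3 = 8 := by rw [sqrt2_pow2]; norm_num
  calc (Real.sqrt 2 : ℝ) ^ 6 = ((Real.sqrt 2 : ℝ) ^ 2) ^ 3 := by ring
  _ = 8 := h

lemma gram (i j : Fin 4) : ip (Shifts i) (Shifts j) = if i = j then 1 else 0 := by
  fin_cases i <;> fin_cases j <;>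
    simp [Shifts, ip_tp3] <;>
    norm_num [ip, ket0, ket1, ketP, ketM, Fin.sum_univ_two, star_s] <;>
    ring_nf <;>
    norm_num [← Complex.ofReal_pow, sqrt2_pow2, sqrt2_pow6]

/-! ### the quadratic form `⟨S, M S⟩` -/

def Phi (S : Q3 → ℂ) (M : Matrix Q3 Q3 ℂ) : ℂ := ∑ x, ∑ y, star (S x) * M x y * S y

lemma Phi_add (S : Q3 → ℂ) (M N : Matrix Q3 Q3 ℂ) : Phi S (M + N) = Phi S M + Phi S N := by
  simp only [Phi, Matrix.add_apply, ← Finset.sum_add_distrib]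
  exact Finset.sum_congr rfl fun x _ => Finset.sum_congr rfl fun y _ => by ring

lemma Phi_zero (S : Q3 → ℂ) : Phi S 0 = 0 := by simp [Phi]

/-- `Phi S` as an additive monoid hom -/
def PhiHom (S : Q3 → ℂ) : Matrix Q3 Q3 ℂ →+ ℂ where
  toFun := Phi S
  map_zero' := Phi_zero S
  map_add' := Phi_add S

lemma Phi_sum (S : Q3 → ℂ) {n : ℕ} (f : Fin n → Matrix Q3 Q3 ℂ) :
    Phi S (∑ i, f i) = ∑ i, Phi S (f i) :=
  map_sum (PhiHom S) f Finset.univ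

lemma Phi_smul (S : Q3 → ℂ) (r : ℂ) (M : Matrix Q3 Q3 ℂ) : Phi S (r • M) = r * Phi S M := by
  simp only [Phi, Matrix.smul_apply, smul_eq_mul, Finset.mul_sum]
  exact Finset.sum_congr rfl fun x _ => Finset.sum_congr rfl fun y _ => by ring

lemma Phi_sub (S : Q3 → ℂ) (M N : Matrix Q3 Q3 ℂ) : Phi S (M - N) = Phi S M - Phi S N := by
  simp only [Phi, Matrix.sub_apply, ← Finset.sum_sub_distrib]
  exact Finset.sum_congr rfl fun x _ => Finset.sum_congr rfl fun y _ => by ring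

lemma Phi_one (S : Q3 → ℂ) : Phi S 1 = ip S S := by
  simp [Phi, Matrix.one_apply, ip, Finset.sum_ite_eq, mul_ite, ite_mul]

lemma Phi_proj (S v : Q3 → ℂ) : Phi S (proj v) = ip S v * ip v S := by
  simp only [Phi, proj, Matrix.vecMulVec_apply, Pi.star_apply, ip]
  rw [Finset.sum_mul_sum]
  exact Finset.sum_congr rfl fun x _ => Finset.sum_congr rfl fun y _ => by ring

lemma ip_conj {n : Type*} [Fintype n] (x y : n → ℂ) : ip y x = star (ip x y) := by
  simp only [ip, star_sum, star_mul', star_star]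
  exact Finset.sum_congr rfl fun i _ => mul_comm _ _

lemma Phi_rho (j : Fin 4) : Phi (Shifts j) rhoSU = 0 := by
  rw [rhoSU, Phi_smul, Phi_sub, Phi_one, Phi_sum]
  have h : ∀ i : Fin 4, Phi (Shifts j) (proj (Shifts i)) = if i = j then 1 else 0 := by
    intro i
    rw [Phi_proj, gram, gram]
    by_cases h : i = j <;> simp [h, eq_comm]
  simp [h, gram, Finset.sum_ite_eq]

/-! ### case analysis lemmas for a single qubit -/

section pairs
variable {u v : ℂ}
lemma p12 (h1 : u = 0) (h2 : v = 0) : u = 0 ∧ v = 0 := ⟨h1, h2⟩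
lemma p13 (h1 : u = 0) (h2 : u + v = 0) : u = 0 ∧ v = 0 := ⟨h1, by linear_combination h2 - h1⟩
lemma p14 (h1 : u = 0) (h2 : u - v = 0) : u = 0 ∧ v = 0 := ⟨h1, by linear_combination h1 - h2⟩
lemma p23 (h1 : v = 0) (h2 : u + v = 0) : u = 0 ∧ v = 0 := ⟨by linear_combination h2 - h1, h1⟩
lemma p24 (h1 : v = 0) (h2 : u - v = 0) : u = 0 ∧ v = 0 := ⟨by linear_combination h2 + h1, h1⟩
lemma p34 (h1 : u + v = 0) (h2 : u - v = 0) : u = 0 ∧ v = 0 :=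
  ⟨by linear_combination (h1 + h2) / 2, by linear_combination (h1 - h2) / 2⟩
end pairs

/-- the Shifts UPB is unextendible: no (nonzero) product vector is orthogonal to all four -/
lemma no_prod (a b c : Fin 2 → ℂ)
    (ha : ¬(a 0 = 0 ∧ a 1 = 0)) (hb : ¬(b 0 = 0 ∧ b 1 = 0)) (hc : ¬(c 0 = 0 ∧ c 1 = 0))
    (D1 : a 0 = 0 ∨ b 1 = 0 ∨ c 0 + c 1 = 0)
    (D2 : a 1 = 0 ∨ b 0 + b 1 = 0 ∨ c 0 = 0)
    (D3 : a 0 + a 1 = 0 ∨ b 0 = 0 ∨ c 1 = 0)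
    (D4 : a 0 - a 1 = 0 ∨ b 0 - b 1 = 0 ∨ c 0 - c 1 = 0) : False := by
  rcases D1 with h1 | h1 | h1 <;> rcases D2 with h2 | h2 | h2 <;>
    rcases D3 with h3 | h3 | h3 <;> rcases D4 with h4 | h4 | h4 <;>
  first
  | exact ha (p12 ‹_› ‹_›) | exact ha (p13 ‹_› ‹_›) | exact ha (p14 ‹_› ‹_›)
  | exact ha (p23 ‹_› ‹_›) | exact ha (p24 ‹_› ‹_›) | exact ha (p34 ‹_› ‹_›)
  | exact hb (p12 ‹_› ‹_›) | exact hb (p13 ‹_› ‹_›) | exact hb (p14 ‹_› ‹_›)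
  | exact hb (p23 ‹_› ‹_›) | exact hb (p24 ‹_› ‹_›) | exact hb (p34 ‹_› ‹_›)
  | exact hc (p12 ‹_› ‹_›) | exact hc (p13 ‹_› ‹_›) | exact hc (p14 ‹_› ‹_›)
  | exact hc (p23 ‹_› ‹_›) | exact hc (p24 ‹_› ‹_›) | exact hc (p34 ‹_› ‹_›)

lemma mul3_cases {x y z : ℂ} (h : x * y * z = 0) : x = 0 ∨ y = 0 ∨ z = 0 := by
  rcases mul_eq_zero.mp h with h' | h'
  · rcases mul_eq_zero.mp h' with h'' | h''
    · exact Or.inl h''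
    · exact Or.inr (Or.inl h'')
  · exact Or.inr (Or.inr h')

lemma strip_s {z : ℂ} (h : (Real.sqrt 2 : ℂ)⁻¹ * z = 0) : z = 0 :=
  (mul_eq_zero.mp h).resolve_left s_ne

theorem rhoSU_not_fully_separable :
    ¬ ∃ (n : ℕ) (p : Fin n → ℝ) (a b c : Fin n → Fin 2 → ℂ),
      (∀ i, 0 ≤ p i) ∧ (∑ i, p i) = 1 ∧
      (∀ i, ip (tp3 (a i) (b i) (c i)) (tp3 (a i) (b i) (c i)) = 1) ∧
      rhoSU = ∑ i, (p i : ℂ) • proj (tp3 (a i) (b i) (c i)) := by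
  rintro ⟨n, p, a, b, c, hp, hsum, hnorm, hrho⟩
  -- for every j, the quadratic form of the RHS at S_j vanishes
  have key : ∀ j : Fin 4, ∀ i : Fin n, p i ≠ 0 → ip (Shifts j) (tp3 (a i) (b i) (c i)) = 0 := by
    intro j
    have h0 : Phi (Shifts j) (∑ i, (p i : ℂ) • proj (tp3 (a i) (b i) (c i))) = 0 := by
      rw [← hrho]; exact Phi_rho j
    rw [Phi_sum] at h0
    have h1 : ∀ i : Fin n, Phi (Shifts j) ((p i : ℂ) • proj (tp3 (a i) (b i) (c i)))
        = ((p i * Complex.normSq (ip (Shifts j) (tp3 (a i) (b i) (c i)))) : ℝ) := by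
      intro i
      rw [Phi_smul, Phi_proj, ip_conj (Shifts j) (tp3 (a i) (b i) (c i))]
      rw [show star (ip (Shifts j) (tp3 (a i) (b i) (c i)))
            = (starRingEnd ℂ) (ip (Shifts j) (tp3 (a i) (b i) (c i))) from rfl,
        Complex.mul_conj]
      push_cast
      ring
    rw [Finset.sum_congr rfl fun i _ => h1 i, ← Complex.ofReal_sum,
      Complex.ofReal_eq_zero] at h0
    have h2 : ∀ i ∈ Finset.univ, (0:ℝ) ≤ p i * Complex.normSq (ip (Shifts j) (tp3 (a i) (b i) (c i))) :=
      fun i _ => mul_nonneg (hp i) (Complex.normSq_nonneg _)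
    intro i hpi
    have h3 := (Finset.sum_eq_zero_iff_of_nonneg h2).mp h0 i (Finset.mem_univ i)
    have h4 : Complex.normSq (ip (Shifts j) (tp3 (a i) (b i) (c i))) = 0 :=
      (mul_eq_zero.mp h3).resolve_left hpi
    exact Complex.normSq_eq_zero.mp h4
  -- there is some i with p i ≠ 0
  obtain ⟨i, hpi⟩ : ∃ i, p i ≠ 0 := by
    by_contra h
    push_neg at h
    simp [h] at hsum
  -- the factors of the corresponding product vector are nonzero
  have hni := hnorm i
  rw [ip_tp3] at hni
  have hA : ¬(a i 0 = 0 ∧ a i 1 = 0) := by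
    rintro ⟨h1, h2⟩
    apply (one_ne_zero : (1:ℂ) ≠ 0)
    rw [← hni]
    simp [ip, Fin.sum_univ_two, h1, h2]
  have hB : ¬(b i 0 = 0 ∧ b i 1 = 0) := by
    rintro ⟨h1, h2⟩
    apply (one_ne_zero : (1:ℂ) ≠ 0)
    rw [← hni]
    simp [ip, Fin.sum_univ_two, h1, h2]
  have hC : ¬(c i 0 = 0 ∧ c i 1 = 0) := by
    rintro ⟨h1, h2⟩
    apply (one_ne_zero : (1:ℂ) ≠ 0)
    rw [← hni]
    simp [ip, Fin.sum_univ_two, h1, h2]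
  -- extract the four orthogonality relations
  have k0 := key 0 i hpi
  have k1 := key 1 i hpi
  have k2 := key 2 i hpi
  have k3 := key 3 i hpi
  rw [show Shifts 0 = tp3 ket0 ket1 ketP from rfl] at k0
  rw [show Shifts 1 = tp3 ket1 ketP ket0 from rfl] at k1
  rw [show Shifts 2 = tp3 ketP ket0 ket1 from rfl] at k2
  rw [show Shifts 3 = tp3 ketM ketM ketM from rfl] at k3
  rw [ip_tp3, ip_ket0, ip_ket1, ip_ketP] at k0
  rw [ip_tp3, ip_ket1, ip_ketP, ip_ket0] at k1
  rw [ip_tp3, ip_ketP, ip_ket0, ip_ket1] at k2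
  rw [ip_tp3, ip_ketM, ip_ketM, ip_ketM] at k3
  apply no_prod (a i) (b i) (c i) hA hB hC
  · rcases mul3_cases k0 with h | h | h
    · exact Or.inl h
    · exact Or.inr (Or.inl h)
    · exact Or.inr (Or.inr (strip_s h))
  · rcases mul3_cases k1 with h | h | h
    · exact Or.inl h
    · exact Or.inr (Or.inl (strip_s h))
    · exact Or.inr (Or.inr h)
  · rcases mul3_cases k2 with h | h | h
    · exact Or.inl (strip_s h)
    · exact Or.inr (Or.inl h)
    · exact Or.inr (Or.inr h)
  · rcases mul3_cases k3 with h | h | h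
    · exact Or.inl (strip_s h)
    · exact Or.inr (Or.inl (strip_s h))
    · exact Or.inr (Or.inr (strip_s h))
end
end

section
/- The operator ρ^[3](8) = (1/8)(I₂₇ − Σ_{ψ∈U}|ψ̃⟩⟨ψ̃|), where U is the 19-element orthonormalized set U^[3]_PB, is a density operator of rank 8 and satisfies ρ^{T_X} = ρ for each subsystem X ∈ {A,B,C}; hence it is PPT across all three bipartite cuts. -/
noncomputable section

open scoped BigOperators ComplexOrder

abbrev T3 := Fin 3 × Fin 3 × Fin 3

/-- |η_i⟩ = |0⟩ + (-1)^i |1⟩ -/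
def eta (i : Fin 2) : Fin 3 → ℂ := ![1, (-1 : ℂ) ^ (i : ℕ), 0]

/-- |ξ_j⟩ = |1⟩ + (-1)^j |2⟩ -/
def xi (j : Fin 2) : Fin 3 → ℂ := ![0, 1, (-1 : ℂ) ^ (j : ℕ)]

/-- computational basis vector |k⟩ of ℂ³ -/
def ketk (k : Fin 3) : Fin 3 → ℂ := fun m => if m = k then 1 else 0

/-- tensor product of three qutrit vectors -/
def tp (a b c : Fin 3 → ℂ) : T3 → ℂ := fun x => a x.1 * b x.2.1 * c x.2.2

/-- the six families B₁,…,B₆ of twisted product states: fam l i j = |ψ(i,j)⟩_{l+1} -/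
def fam (l : Fin 6) (i j : Fin 2) : T3 → ℂ :=
  ![tp (ketk 0) (eta i) (xi j),
    tp (eta i) (ketk 2) (xi j),
    tp (ketk 2) (xi j) (eta i),
    tp (eta i) (xi j) (ketk 0),
    tp (xi j) (ketk 0) (eta i),
    tp (xi j) (eta i) (ketk 2)] l

/-- the stopper state S = (|0⟩+|1⟩+|2⟩)^{⊗3} -/
def stopper : T3 → ℂ := tp (fun _ => 1) (fun _ => 1) (fun _ => 1)

/-- normalization of a vector -/
noncomputable def ntz {n : Type*} [Fintype n] (v : n → ℂ) : n → ℂ :=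
  fun i => ((Real.sqrt (∑ m, Complex.normSq (v m)) : ℝ) : ℂ)⁻¹ * v i

/-- index type for the 19-element UPB: the 18 twisted states with (i,j) ≠ (0,0), plus S -/
abbrev UPBIdx := {x : Fin 6 × Fin 2 × Fin 2 // x.2 ≠ ((0 : Fin 2), (0 : Fin 2))} ⊕ Unit

/-- the 19 vectors of U^[3]_PB -/
def UPB : UPBIdx → (T3 → ℂ) :=
  Sum.elim (fun x => fam x.1.1 x.1.2.1 x.1.2.2) (fun _ => stopper)

/-- partial transpose with respect to subsystem A -/
def ptA (ρ : Matrix T3 T3 ℂ) : Matrix T3 T3 ℂ :=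
  Matrix.of fun x y => ρ (y.1, x.2) (x.1, y.2)

/-- partial transpose with respect to subsystem B -/
def ptB (ρ : Matrix T3 T3 ℂ) : Matrix T3 T3 ℂ :=
  Matrix.of fun x y => ρ (x.1, y.2.1, x.2.2) (y.1, x.2.1, y.2.2)

/-- partial transpose with respect to subsystem C -/
def ptC (ρ : Matrix T3 T3 ℂ) : Matrix T3 T3 ℂ :=
  Matrix.of fun x y => ρ (x.1, x.2.1, y.2.2) (y.1, y.2.1, x.2.2)

/-- the state ρ^[3](8) -/
noncomputable def rho3 : Matrix T3 T3 ℂ :=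
  (8 : ℂ)⁻¹ • ((1 : Matrix T3 T3 ℂ) - ∑ t : UPBIdx, proj (ntz (UPB t)))

open Matrix

lemma sum3_mul (f g h : Fin 3 → ℂ) :
    (∑ i, f i) * (∑ i, g i) * (∑ i, h i) = ∑ i, ∑ j, ∑ k, f i * g j * h k := by
  rw [Finset.sum_mul_sum]
  simp_rw [Finset.sum_mul, Finset.mul_sum]

lemma ip_tp (a b c a' b' c' : Fin 3 → ℂ) :
    ip (tp a b c) (tp a' b' c') = ip a a' * ip b b' * ip c c' := by
  simp only [ip, tp, sum3_mul, Fintype.sum_prod_type]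
  refine Finset.sum_congr rfl fun i _ => Finset.sum_congr rfl fun j _ =>
    Finset.sum_congr rfl fun k _ => ?_
  simp only [star_mul']
  ring

lemma ip3 (x y : Fin 3 → ℂ) :
    ip x y = star (x 0) * y 0 + star (x 1) * y 1 + star (x 2) * y 2 := by
  simp [ip, Fin.sum_univ_three]

lemma ip_eta_k2 (i : Fin 2) : ip (eta i) (ketk 2) = 0 := by simp [ip3, eta, ketk]

lemma ip_k2_eta (i : Fin 2) : ip (ketk 2) (eta i) = 0 := by simp [ip3, eta, ketk]

lemma ip_xi_k0 (j : Fin 2) : ip (xi j) (ketk 0) = 0 := by simp [ip3, xi, ketk]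

lemma ip_k0_xi (j : Fin 2) : ip (ketk 0) (xi j) = 0 := by simp [ip3, xi, ketk]

lemma ip_k0_k2 : ip (ketk 0) (ketk 2) = 0 := by simp [ip3, ketk]

lemma ip_k2_k0 : ip (ketk 2) (ketk 0) = 0 := by simp [ip3, ketk]

lemma ip_eta_eta (i i' : Fin 2) :
    ip (eta i) (eta i') = 1 + (-1:ℂ)^(i:ℕ) * (-1:ℂ)^(i':ℕ) := by simp [ip3, eta, star_pow]

lemma ip_xi_xi (j j' : Fin 2) :
    ip (xi j) (xi j') = 1 + (-1:ℂ)^(j:ℕ) * (-1:ℂ)^(j':ℕ) := by simp [ip3, xi, star_pow]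

lemma ip_k_k (k : Fin 3) : ip (ketk k) (ketk k) = 1 := by fin_cases k <;> simp [ip3, ketk]

lemma ip_one_eta (i : Fin 2) : ip (fun _ => 1) (eta i) = 1 + (-1:ℂ)^(i:ℕ) := by
  simp [ip3, eta, star_pow]

lemma ip_eta_one (i : Fin 2) : ip (eta i) (fun _ => 1) = 1 + (-1:ℂ)^(i:ℕ) := by
  simp [ip3, eta, star_pow]

lemma ip_one_xi (j : Fin 2) : ip (fun _ => 1) (xi j) = 1 + (-1:ℂ)^(j:ℕ) := by
  simp [ip3, xi, star_pow]

lemma ip_xi_one (j : Fin 2) : ip (xi j) (fun _ => 1) = 1 + (-1:ℂ)^(j:ℕ) := by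
  simp [ip3, xi, star_pow]

lemma ip_one_k (k : Fin 3) : ip (fun _ => 1) (ketk k) = 1 := by fin_cases k <;> simp [ip3, ketk]

lemma ip_k_one (k : Fin 3) : ip (ketk k) (fun _ => 1) = 1 := by fin_cases k <;> simp [ip3, ketk]

lemma ip_one_one : ip (fun _ : Fin 3 => (1:ℂ)) (fun _ => 1) = 3 := by
  simp [ip3]; norm_num

lemma fam0 (i j : Fin 2) : fam 0 i j = tp (ketk 0) (eta i) (xi j) := rfl

lemma fam1 (i j : Fin 2) : fam 1 i j = tp (eta i) (ketk 2) (xi j) := rfl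

lemma fam2 (i j : Fin 2) : fam 2 i j = tp (ketk 2) (xi j) (eta i) := rfl

lemma fam3 (i j : Fin 2) : fam 3 i j = tp (eta i) (xi j) (ketk 0) := rfl

lemma fam4 (i j : Fin 2) : fam 4 i j = tp (xi j) (ketk 0) (eta i) := rfl

lemma fam5 (i j : Fin 2) : fam 5 i j = tp (xi j) (eta i) (ketk 2) := rfl

lemma fam2' (i j : Fin 2) (h : 2 < 6) : fam ⟨2, h⟩ i j = tp (ketk 2) (xi j) (eta i) := rfl

lemma fam3' (i j : Fin 2) (h : 3 < 6) : fam ⟨3, h⟩ i j = tp (eta i) (xi j) (ketk 0) := rfl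

lemma fam4' (i j : Fin 2) (h : 4 < 6) : fam ⟨4, h⟩ i j = tp (xi j) (ketk 0) (eta i) := rfl

lemma fam5' (i j : Fin 2) (h : 5 < 6) : fam ⟨5, h⟩ i j = tp (xi j) (eta i) (ketk 2) := rfl

lemma ortho : ∀ s t : UPBIdx, s ≠ t → ip (UPB s) (UPB t) = 0 := by
  rintro (⟨⟨l, i, j⟩, hs⟩ | ⟨⟩) (⟨⟨l', i', j'⟩, ht⟩ | ⟨⟩) hne
  · simp only [UPB, Sum.elim_inl]
    by_cases hl : l = l'
    · subst hl
      have hij : ¬(i = i' ∧ j = j') := by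
        intro ⟨h1, h2⟩; exact hne (by subst h1; subst h2; rfl)
      clear hne hs ht
      fin_cases l <;> fin_cases i <;> fin_cases i' <;> fin_cases j <;> fin_cases j' <;>
        simp_all [fam0, fam1, fam2, fam3, fam4, fam5, fam2', fam3', fam4', fam5', ip_tp, ip_eta_eta, ip_xi_xi, ip_k_k] <;> norm_num
    · clear hne hs ht
      fin_cases l <;> fin_cases l' <;>
        first
        | (exact absurd rfl hl)
        | norm_num [fam0, fam1, fam2, fam3, fam4, fam5, fam2', fam3', fam4', fam5', ip_tp, ip_eta_k2, ip_k2_eta, ip_xi_k0,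
            ip_k0_xi, ip_k0_k2, ip_k2_k0]
  · simp only [UPB, Sum.elim_inl, Sum.elim_inr, stopper]
    have hij : ¬(i = 0 ∧ j = 0) := by intro ⟨h1, h2⟩; exact hs (by subst h1; subst h2; rfl)
    clear hs hne
    fin_cases l <;> fin_cases i <;> fin_cases j <;>
      simp_all [fam0, fam1, fam2, fam3, fam4, fam5, fam2', fam3', fam4', fam5', stopper, ip_tp, ip_eta_one, ip_xi_one, ip_k_one] <;> norm_num
  · simp only [UPB, Sum.elim_inl, Sum.elim_inr, stopper]
    have hij : ¬(i' = 0 ∧ j' = 0) := by intro ⟨h1, h2⟩; exact ht (by subst h1; subst h2; rfl)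
    clear ht hne
    fin_cases l' <;> fin_cases i' <;> fin_cases j' <;>
      simp_all [fam0, fam1, fam2, fam3, fam4, fam5, fam2', fam3', fam4', fam5', stopper, ip_tp, ip_one_eta, ip_one_xi, ip_one_k] <;> norm_num
  · exact absurd rfl hne

lemma ip_fam_self (l : Fin 6) (i j : Fin 2) : ip (fam l i j) (fam l i j) = 4 := by
  fin_cases l <;> fin_cases i <;> fin_cases j <;>
    simp_all [fam0, fam1, fam2, fam3, fam4, fam5, fam2', fam3', fam4', fam5',
      ip_tp, ip_eta_eta, ip_xi_xi, ip_k_k] <;> norm_num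

lemma ip_stopper_self : ip stopper stopper = 27 := by
  norm_num [stopper, ip_tp, ip_one_one]

lemma sum_normSq_eq (v : T3 → ℂ) : ((∑ m, Complex.normSq (v m) : ℝ) : ℂ) = ip v v := by
  rw [ip, Complex.ofReal_sum]
  refine Finset.sum_congr rfl fun m _ => ?_
  rw [← Complex.mul_conj, Complex.star_def, mul_comm]

lemma ip_ntz_self {v : T3 → ℂ} {S : ℝ} (hS : 0 < S) (h : ip v v = (S : ℂ)) :
    ip (ntz v) (ntz v) = 1 := by
  have hsum : (∑ m, Complex.normSq (v m) : ℝ) = S := by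
    have := sum_normSq_eq v
    rw [h] at this
    exact_mod_cast this
  have hsqrt : Real.sqrt (∑ m, Complex.normSq (v m)) = Real.sqrt S := by rw [hsum]
  have key : ip (ntz v) (ntz v)
      = star ((Real.sqrt S : ℝ) : ℂ)⁻¹ * ((Real.sqrt S : ℝ) : ℂ)⁻¹ * ip v v := by
    rw [ip, ip, Finset.mul_sum]
    refine Finset.sum_congr rfl fun m _ => ?_
    simp only [ntz, hsqrt, star_mul']
    ring
  have h1 : star ((((Real.sqrt S : ℝ)) : ℂ)⁻¹) = ((Real.sqrt S : ℝ) : ℂ)⁻¹ := by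
    simp [Complex.star_def, ← Complex.ofReal_inv]
  rw [key, h, h1]
  rw [← Complex.ofReal_inv, ← Complex.ofReal_mul, ← Complex.ofReal_mul]
  rw [show (Real.sqrt S)⁻¹ * (Real.sqrt S)⁻¹ * S = S / (Real.sqrt S * Real.sqrt S) by ring,
    Real.mul_self_sqrt hS.le, div_self hS.ne']
  norm_num

lemma ip_ntz_zero {v w : T3 → ℂ} (h : ip v w = 0) : ip (ntz v) (ntz w) = 0 := by
  have key : ip (ntz v) (ntz w)
      = star (((Real.sqrt (∑ m, Complex.normSq (v m)) : ℝ) : ℂ))⁻¹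
        * ((Real.sqrt (∑ m, Complex.normSq (w m)) : ℝ) : ℂ)⁻¹ * ip v w := by
    rw [ip, ip, Finset.mul_sum]
    refine Finset.sum_congr rfl fun m _ => ?_
    simp only [ntz, star_mul', star_inv₀]
    ring
  rw [key, h, mul_zero]

lemma upb_unit (t : UPBIdx) : ip (ntz (UPB t)) (ntz (UPB t)) = 1 := by
  rcases t with ⟨⟨l, i, j⟩, h⟩ | ⟨⟩
  · exact ip_ntz_self (by norm_num) (ip_fam_self l i j)
  · exact ip_ntz_self (by norm_num) ip_stopper_self

lemma star_eta (i : Fin 2) (m : Fin 3) : star (eta i m) = eta i m := by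
  fin_cases m <;> simp [eta, star_pow]

lemma star_xi (j : Fin 2) (m : Fin 3) : star (xi j m) = xi j m := by
  fin_cases m <;> simp [xi, star_pow]

lemma star_ketk (k m : Fin 3) : star (ketk k m) = ketk k m := by
  by_cases h : m = k <;> simp [ketk, h]

lemma star_UPB (t : UPBIdx) (x : T3) : star (UPB t x) = UPB t x := by
  rcases t with ⟨⟨l, i, j⟩, h⟩ | ⟨⟩
  · fin_cases l <;>
      simp [UPB, fam0, fam1, fam2, fam3, fam4, fam5, fam2', fam3', fam4', fam5', tp,
        star_mul', star_eta, star_xi, star_ketk]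
  · simp [UPB, stopper, tp]

lemma UPB_prod (t : UPBIdx) : ∃ a b c, UPB t = tp a b c := by
  rcases t with ⟨⟨l, i, j⟩, h⟩ | ⟨⟩
  · fin_cases l <;> exact ⟨_, _, _, rfl⟩
  · exact ⟨(fun _ => 1), (fun _ => 1), (fun _ => 1), rfl⟩

lemma proj_ntz_apply (v : T3 → ℂ) (hr : ∀ x, star (v x) = v x) (a b : T3) :
    proj (ntz v) a b =
      ((Real.sqrt (∑ m, Complex.normSq (v m)) : ℝ) : ℂ)⁻¹
        * ((Real.sqrt (∑ m, Complex.normSq (v m)) : ℝ) : ℂ)⁻¹ * (v a * v b) := by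
  have hsC : star ((((Real.sqrt (∑ m, Complex.normSq (v m)) : ℝ)) : ℂ)⁻¹)
      = (((Real.sqrt (∑ m, Complex.normSq (v m)) : ℝ)) : ℂ)⁻¹ := by
    simp [Complex.star_def, ← Complex.ofReal_inv]
  simp only [proj, Matrix.vecMulVec_apply, Pi.star_apply, ntz, star_mul', hr, hsC]
  ring

lemma tp_swapA (a b c : Fin 3 → ℂ) (x y : T3) :
    tp a b c (y.1, x.2) * tp a b c (x.1, y.2) = tp a b c x * tp a b c y := by
  simp only [tp]; ring

lemma tp_swapB (a b c : Fin 3 → ℂ) (x y : T3) :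
    tp a b c (x.1, y.2.1, x.2.2) * tp a b c (y.1, x.2.1, y.2.2)
      = tp a b c x * tp a b c y := by
  simp only [tp]; ring

lemma tp_swapC (a b c : Fin 3 → ℂ) (x y : T3) :
    tp a b c (x.1, x.2.1, y.2.2) * tp a b c (y.1, y.2.1, x.2.2)
      = tp a b c x * tp a b c y := by
  simp only [tp]; ring

lemma proj_swapA (t : UPBIdx) (x y : T3) :
    proj (ntz (UPB t)) (y.1, x.2) (x.1, y.2) = proj (ntz (UPB t)) x y := by
  obtain ⟨a, b, c, hv⟩ := UPB_prod t
  rw [proj_ntz_apply _ (star_UPB t), proj_ntz_apply _ (star_UPB t), hv, tp_swapA]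

lemma proj_swapB (t : UPBIdx) (x y : T3) :
    proj (ntz (UPB t)) (x.1, y.2.1, x.2.2) (y.1, x.2.1, y.2.2) = proj (ntz (UPB t)) x y := by
  obtain ⟨a, b, c, hv⟩ := UPB_prod t
  rw [proj_ntz_apply _ (star_UPB t), proj_ntz_apply _ (star_UPB t), hv, tp_swapB]

lemma proj_swapC (t : UPBIdx) (x y : T3) :
    proj (ntz (UPB t)) (x.1, x.2.1, y.2.2) (y.1, y.2.1, x.2.2) = proj (ntz (UPB t)) x y := by
  obtain ⟨a, b, c, hv⟩ := UPB_prod t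
  rw [proj_ntz_apply _ (star_UPB t), proj_ntz_apply _ (star_UPB t), hv, tp_swapC]

lemma ptA_rho3 : ptA rho3 = rho3 := by
  ext x y
  have hone : (((y.1, x.2) : T3) = ((x.1, y.2) : T3)) ↔ x = y := by
    constructor
    · intro h; rw [Prod.ext_iff] at h ⊢; exact ⟨h.1.symm, h.2⟩
    · intro h; subst h; rfl
  show rho3 (y.1, x.2) (x.1, y.2) = rho3 x y
  simp only [rho3, Matrix.smul_apply, Matrix.sub_apply, Matrix.sum_apply, Matrix.one_apply,
    proj_swapA, hone]

lemma ptB_rho3 : ptB rho3 = rho3 := by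
  ext x y
  have hone : (((x.1, y.2.1, x.2.2) : T3) = ((y.1, x.2.1, y.2.2) : T3)) ↔ x = y := by
    simp only [Prod.ext_iff]
    constructor
    · rintro ⟨h1, h2, h3⟩; exact ⟨h1, h2.symm, h3⟩
    · rintro ⟨h1, h2, h3⟩; exact ⟨h1, h2.symm, h3⟩
  show rho3 (x.1, y.2.1, x.2.2) (y.1, x.2.1, y.2.2) = rho3 x y
  simp only [rho3, Matrix.smul_apply, Matrix.sub_apply, Matrix.sum_apply, Matrix.one_apply,
    proj_swapB, hone]

lemma ptC_rho3 : ptC rho3 = rho3 := by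
  ext x y
  have hone : (((x.1, x.2.1, y.2.2) : T3) = ((y.1, y.2.1, x.2.2) : T3)) ↔ x = y := by
    simp only [Prod.ext_iff]
    constructor
    · rintro ⟨h1, h2, h3⟩; exact ⟨h1, h2, h3.symm⟩
    · rintro ⟨h1, h2, h3⟩; exact ⟨h1, h2, h3.symm⟩
  show rho3 (x.1, x.2.1, y.2.2) (y.1, y.2.1, x.2.2) = rho3 x y
  simp only [rho3, Matrix.smul_apply, Matrix.sub_apply, Matrix.sum_apply, Matrix.one_apply,
    proj_swapC, hone]

lemma proj_mul_proj {n : Type*} [Fintype n] [DecidableEq n] (a b : n → ℂ) :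
    proj a * proj b = ip a b • Matrix.vecMulVec a (star b) := by
  ext x y
  simp only [proj, Matrix.mul_apply, Matrix.vecMulVec_apply, Pi.star_apply, Matrix.smul_apply,
    smul_eq_mul]
  rw [ip, Finset.sum_mul]
  exact Finset.sum_congr rfl fun k _ => by ring

lemma proj_herm {n : Type*} [Fintype n] (v : n → ℂ) : (proj v)ᴴ = proj v := by
  ext x y
  simp [proj, Matrix.conjTranspose_apply, Matrix.vecMulVec_apply, mul_comm]

lemma horth : ∀ s t : UPBIdx, s ≠ t → ip (ntz (UPB s)) (ntz (UPB t)) = 0 :=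
  fun s t h => ip_ntz_zero (ortho s t h)

lemma hPP : (∑ t : UPBIdx, proj (ntz (UPB t))) * (∑ t : UPBIdx, proj (ntz (UPB t)))
    = ∑ t : UPBIdx, proj (ntz (UPB t)) := by
  rw [Finset.sum_mul_sum]
  have h1 : ∀ s t : UPBIdx,
      proj (ntz (UPB s)) * proj (ntz (UPB t)) = if s = t then proj (ntz (UPB s)) else 0 := by
    intro s t
    rw [proj_mul_proj]
    by_cases h : s = t
    · subst h; rw [upb_unit, if_pos rfl, one_smul]; rfl
    · rw [horth s t h, if_neg h, zero_smul]
  simp_rw [h1]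
  simp

lemma hPH : (∑ t : UPBIdx, proj (ntz (UPB t)))ᴴ = ∑ t : UPBIdx, proj (ntz (UPB t)) := by
  rw [Matrix.conjTranspose_sum]
  exact Finset.sum_congr rfl fun t _ => proj_herm _

lemma hMH : ((1 : Matrix T3 T3 ℂ) - ∑ t : UPBIdx, proj (ntz (UPB t)))ᴴ
    = (1 : Matrix T3 T3 ℂ) - ∑ t : UPBIdx, proj (ntz (UPB t)) := by
  rw [Matrix.conjTranspose_sub, Matrix.conjTranspose_one, hPH]

lemma hMM : ((1 : Matrix T3 T3 ℂ) - ∑ t : UPBIdx, proj (ntz (UPB t)))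
      * ((1 : Matrix T3 T3 ℂ) - ∑ t : UPBIdx, proj (ntz (UPB t)))
    = (1 : Matrix T3 T3 ℂ) - ∑ t : UPBIdx, proj (ntz (UPB t)) := by
  rw [sub_mul, one_mul, mul_sub, mul_one, hPP, sub_self, sub_zero]

lemma rho3_psd : rho3.PosSemidef := by
  set M : Matrix T3 T3 ℂ := (1 : Matrix T3 T3 ℂ) - ∑ t : UPBIdx, proj (ntz (UPB t)) with hM
  have hc : star (((Real.sqrt 8 : ℝ) : ℂ)⁻¹) * ((Real.sqrt 8 : ℝ) : ℂ)⁻¹ = (8 : ℂ)⁻¹ := by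
    have : star ((((Real.sqrt 8 : ℝ)) : ℂ)⁻¹) = (((Real.sqrt 8 : ℝ)) : ℂ)⁻¹ := by
      simp [Complex.star_def, ← Complex.ofReal_inv]
    rw [this, ← Complex.ofReal_inv, ← Complex.ofReal_mul]
    rw [show (Real.sqrt 8)⁻¹ * (Real.sqrt 8)⁻¹ = (Real.sqrt 8 * Real.sqrt 8)⁻¹ by ring,
      Real.mul_self_sqrt (by norm_num)]
    norm_num
  have key : rho3 = (((Real.sqrt 8 : ℝ) : ℂ)⁻¹ • M)ᴴ * (((Real.sqrt 8 : ℝ) : ℂ)⁻¹ • M) := by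
    rw [Matrix.conjTranspose_smul, hMH, Matrix.smul_mul, Matrix.mul_smul, hMM, smul_smul, hc]
    rfl
  rw [key]
  exact Matrix.posSemidef_conjTranspose_mul_self _

lemma card_UPBIdx : Fintype.card UPBIdx = 19 := by decide

lemma rho3_trace : rho3.trace = 1 := by
  have htp : ∀ t : UPBIdx, (proj (ntz (UPB t))).trace = 1 := fun t => by
    have h : (proj (ntz (UPB t))).trace = ip (ntz (UPB t)) (ntz (UPB t)) := by
      simp [proj, Matrix.trace, Matrix.diag, Matrix.vecMulVec_apply, ip, mul_comm]
    rw [h, upb_unit]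
  rw [rho3, Matrix.trace_smul, Matrix.trace_sub, Matrix.trace_sum, Matrix.trace_one]
  simp only [htp, Finset.sum_const, Finset.card_univ, card_UPBIdx, nsmul_eq_mul]
  rw [show (Fintype.card T3 : ℂ) = 27 from by rw [show Fintype.card T3 = 27 from rfl]; norm_num]
  norm_num

lemma rho3_rank : rho3.rank = 8 := by
  classical
  set P : Matrix T3 T3 ℂ := ∑ t : UPBIdx, proj (ntz (UPB t)) with hP
  set M : Matrix T3 T3 ℂ := (1 : Matrix T3 T3 ℂ) - P with hMdef
  -- rank of P is 19
  set A : Matrix UPBIdx T3 ℂ := Matrix.of fun t x => star (ntz (UPB t) x) with hA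
  have hAhA : Aᴴ * A = P := by
    ext x y
    simp only [Matrix.mul_apply, Matrix.conjTranspose_apply, hA, Matrix.of_apply, star_star,
      hP, Matrix.sum_apply, proj, Matrix.vecMulVec_apply, Pi.star_apply]
  have hAA : A * Aᴴ = 1 := by
    ext s t
    simp only [Matrix.mul_apply, Matrix.conjTranspose_apply, hA, Matrix.of_apply, star_star,
      Matrix.one_apply]
    by_cases h : s = t
    · subst h; rw [if_pos rfl]
      simpa [ip] using upb_unit s
    · rw [if_neg h]
      simpa [ip] using horth s t h
  have hrA : A.rank = 19 := by
    refine le_antisymm ?_ ?_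
    · simpa only [card_UPBIdx] using A.rank_le_card_height
    · calc (19 : ℕ) = (1 : Matrix UPBIdx UPBIdx ℂ).rank := by
            rw [Matrix.rank_one, card_UPBIdx]
        _ = (A * Aᴴ).rank := by rw [hAA]
        _ ≤ A.rank := Matrix.rank_mul_le_left _ _
  have hrP : P.rank = 19 := by rw [← hAhA, Matrix.rank_conjTranspose_mul_self, hrA]
  -- dimension bookkeeping
  have hfr : Module.finrank ℂ (T3 → ℂ) = 27 := by
    rw [Module.finrank_pi]; rfl
  have hrnP := LinearMap.finrank_range_add_finrank_ker (P.mulVecLin)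
  have hrangeP : Module.finrank ℂ (LinearMap.range P.mulVecLin) = 19 := hrP
  have hkerP : Module.finrank ℂ (LinearMap.ker P.mulVecLin) = 8 := by
    rw [hrangeP, hfr] at hrnP; omega
  -- M has rank ≤ 8
  have hPM : P * M = 0 := by rw [hMdef, mul_sub, mul_one, hPP, sub_self]
  have hsub : LinearMap.range M.mulVecLin ≤ LinearMap.ker P.mulVecLin := by
    rintro _ ⟨x, rfl⟩
    simp only [LinearMap.mem_ker, Matrix.mulVecLin_apply, Matrix.mulVec_mulVec, hPM,
      Matrix.zero_mulVec]
  have hle : M.rank ≤ 8 := by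
    have h := Submodule.finrank_mono hsub
    rw [hkerP] at h
    exact h
  -- M has rank ≥ 8
  have hge : 8 ≤ M.rank := by
    have h1 : P + M = 1 := by rw [hMdef]; abel
    have hsub2 : LinearMap.range (1 : Matrix T3 T3 ℂ).mulVecLin
        ≤ LinearMap.range P.mulVecLin ⊔ LinearMap.range M.mulVecLin := by
      rintro _ ⟨x, rfl⟩
      have hx : (1 : Matrix T3 T3 ℂ).mulVecLin x = P.mulVecLin x + M.mulVecLin x := by
        simp only [Matrix.mulVecLin_apply, ← Matrix.add_mulVec, h1]
      rw [hx]
      exact Submodule.add_mem_sup (LinearMap.mem_range_self _ x) (LinearMap.mem_range_self _ x)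
    have h2 := Submodule.finrank_mono hsub2
    have h3 := Submodule.finrank_sup_add_finrank_inf_eq
      (LinearMap.range P.mulVecLin) (LinearMap.range M.mulVecLin)
    have h4 : (1 : Matrix T3 T3 ℂ).rank = 27 := by rw [Matrix.rank_one]; rfl
    have h5 : Module.finrank ℂ (LinearMap.range (1 : Matrix T3 T3 ℂ).mulVecLin) = 27 := h4
    have h6 : Module.finrank ℂ (LinearMap.range M.mulVecLin) = M.rank := rfl
    rw [h5] at h2
    rw [hrangeP, h6] at h3
    omega
  -- transfer to rho3
  have e1 : rho3 = ((8 : ℂ)⁻¹ • (1 : Matrix T3 T3 ℂ)) * M := by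
    rw [Matrix.smul_mul, one_mul]; rfl
  have e2 : M = ((8 : ℂ) • (1 : Matrix T3 T3 ℂ)) * rho3 := by
    rw [Matrix.smul_mul, one_mul, rho3, smul_smul]
    rw [show (8 : ℂ) * 8⁻¹ = 1 by norm_num, one_smul]
  have hle2 : rho3.rank ≤ M.rank := by
    rw [e1]; exact Matrix.rank_mul_le_right _ _
  have hge2 : M.rank ≤ rho3.rank := by
    conv_lhs => rw [e2]
    exact Matrix.rank_mul_le_right _ _
  omega

theorem rho3_density_rank8_ppt :
    rho3.PosSemidef ∧ rho3.trace = 1 ∧ rho3.rank = 8 ∧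
    ptA rho3 = rho3 ∧ ptB rho3 = rho3 ∧ ptC rho3 = rho3 :=
  ⟨rho3_psd, rho3_trace, rho3_rank, ptA_rho3, ptB_rho3, ptC_rho3⟩
end
end
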